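/- Let n ≥ 3 and let r_1, r_2, r_3 ∈ [n] be pairwise distinct. Then there exists a concurrently odd permutation π ∈ SC^{(r_1)} together with τ_1 ∈ AC^{(r_3)}, τ_2, τ_4 ∈ AC^{(r_2)}, and τ_3 ∈ AC^{(r_1)} such that π = τ_1 ∘ τ_2 ∘ τ_3 ∘ τ_4. -/

import Mathlib

open Equiv

/-- `x` with its `i`-th bit flipped. -/
def flipBit {n : ℕ} (i : Fin n) (x : Fin n → Bool) : Fin n → Bool :=
  Function.update x i (!x i)

/-- `SC i`: the set of `i`-concurrent controlled permutations (`i`-CCRBFs) of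
the hypercube `{0,1}^n`: the `i`-th bit of every point is preserved, and the
action on all other bits does not depend on the `i`-th bit. -/
def SC {n : ℕ} (i : Fin n) : Set (Perm (Fin n → Bool)) :=
  {σ | (∀ x, σ x i = x i) ∧ ∀ x, ∀ k, k ≠ i → σ x k = σ (flipBit i x) k}

/-- `AC i`: the set of concurrently even `i`-CCRBFs: those `σ ∈ SC i` whose
induced permutation of the face `{x | x i = false}` is even. -/
def AC {n : ℕ} (i : Fin n) : Set (Perm (Fin n → Bool)) :=
  {σ | σ ∈ SC i ∧ ∃ h : ∀ x : Fin n → Bool, x i = false ↔ σ x i = false,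
    Perm.sign (σ.subtypePerm (p := fun y => y i = false) (fun x => (h x).symm)) = 1}

namespace OddFour

abbrev B3 := Bool × Bool × Bool

/-- build a perm of `B3` from explicit mutually inverse functions. -/
def mkP (f g : B3 → B3) (h1 : ∀ v, g (f v) = v) (h2 : ∀ v, f (g v) = v) : Perm B3 :=
  ⟨f, g, h1, h2⟩

def s1fun : B3 → B3 := fun v => (v.1, match v.2 with
  | (false, true) => (true, false)
  | (true, false) => (false, true)
  | u => u)

def s2fun : B3 → B3 := fun v => (v.1, match v.2 with
  | (true, false) => (true, true)
  | (true, true) => (true, false)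
  | u => u)

def wfun : B3 → B3 := fun v => (v.1, match v.2 with
  | (false, true) => (true, true)
  | (true, true) => (false, true)
  | u => u)

def s1 : Perm B3 := mkP s1fun s1fun (by decide) (by decide)
def s2 : Perm B3 := mkP s2fun s2fun (by decide) (by decide)
def w : Perm B3 := mkP wfun wfun (by decide) (by decide)
def ρ : Perm B3 := mkP (fun v => (v.2.1, v.2.2, v.1)) (fun v => (v.2.2, v.1, v.2.1))
  (by decide) (by decide)
def q : Perm B3 := s1 * s2

section Lift

variable {n : ℕ}

/-- all bits outside `{i,j,k}` are false. -/
def cond3 (i j k : Fin n) (x : Fin n → Bool) : Prop :=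
  ∀ m, m ≠ i → m ≠ j → m ≠ k → x m = false

instance (i j k : Fin n) : DecidablePred (cond3 i j k) := fun _ =>
  Fintype.decidableForallFintype

def rd (i j k : Fin n) (x : Fin n → Bool) : B3 := (x i, x j, x k)

def wr (i j k : Fin n) (x : Fin n → Bool) (v : B3) : Fin n → Bool :=
  fun m => if m = i then v.1 else if m = j then v.2.1 else if m = k then v.2.2 else x m

def pt (i j k : Fin n) (v : B3) : Fin n → Bool := wr i j k (fun _ => false) v

variable {i j k : Fin n}

lemma wr_out (x v) {m : Fin n} (h1 : m ≠ i) (h2 : m ≠ j) (h3 : m ≠ k) :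
    wr i j k x v m = x m := by simp [wr, h1, h2, h3]

lemma wr_i (x) (v : B3) : wr i j k x v i = v.1 := by simp [wr]

lemma wr_j (hij : i ≠ j) (x) (v : B3) : wr i j k x v j = v.2.1 := by
  simp [wr, hij.symm]

lemma wr_k (hik : i ≠ k) (hjk : j ≠ k) (x) (v : B3) : wr i j k x v k = v.2.2 := by
  simp [wr, hik.symm, hjk.symm]

lemma rd_wr (hij : i ≠ j) (hik : i ≠ k) (hjk : j ≠ k) (x v) :
    rd i j k (wr i j k x v) = v := by
  obtain ⟨a, b, c⟩ := v
  simp [rd, wr_i, wr_j hij, wr_k hik hjk]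

lemma cond3_wr {x : Fin n → Bool} {v : B3} :
    cond3 i j k (wr i j k x v) ↔ cond3 i j k x :=
  ⟨fun h m h1 h2 h3 => (wr_out x v h1 h2 h3).symm.trans (h m h1 h2 h3),
   fun h m h1 h2 h3 => (wr_out x v h1 h2 h3).trans (h m h1 h2 h3)⟩

lemma wr_wr (x v u) : wr i j k (wr i j k x v) u = wr i j k x u := by
  funext m
  simp only [wr]
  split_ifs with h1 h2 h3 <;> rfl

lemma wr_rd (x) : wr i j k x (rd i j k x) = x := by
  funext m
  simp only [wr, rd]
  split_ifs with h1 h2 h3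
  · subst h1; rfl
  · subst h2; rfl
  · subst h3; rfl
  · rfl

lemma cond3_pt (v : B3) : cond3 i j k (pt i j k v) := fun m h1 h2 h3 =>
  wr_out _ _ h1 h2 h3

lemma eq_pt (hij : i ≠ j) (hik : i ≠ k) (hjk : j ≠ k) {x : Fin n → Bool}
    (hx : cond3 i j k x) : x = pt i j k (rd i j k x) := by
  funext m
  by_cases h1 : m = i
  · subst h1; rw [pt, wr_i]; rfl
  · by_cases h2 : m = j
    · subst h2; rw [pt, wr_j hij]; rfl
    · by_cases h3 : m = k
      · subst h3; rw [pt, wr_k hik hjk]; rfl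
      · rw [hx m h1 h2 h3, pt, wr_out _ _ h1 h2 h3]

lemma wr_eq_pt {x : Fin n → Bool} (hx : cond3 i j k x) (v : B3) :
    wr i j k x v = pt i j k v := by
  funext m
  simp only [wr, pt]
  split_ifs with h1 h2 h3
  · rfl
  · rfl
  · rfl
  · exact hx m h1 h2 h3

lemma rd_pt (hij : i ≠ j) (hik : i ≠ k) (hjk : j ≠ k) (v : B3) :
    rd i j k (pt i j k v) = v := rd_wr hij hik hjk _ _

lemma pt_inj (hij : i ≠ j) (hik : i ≠ k) (hjk : j ≠ k) {v u : B3}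
    (h : pt i j k v = pt i j k u) : v = u := by
  rw [← rd_pt hij hik hjk v, h, rd_pt hij hik hjk]

/-- Lift a permutation of `B3` to the hypercube: apply it to the bits at
`(i,j,k)` whenever all other bits are false. -/
def G (hij : i ≠ j) (hik : i ≠ k) (hjk : j ≠ k) (f : Perm B3) :
    Perm (Fin n → Bool) where
  toFun x := if cond3 i j k x then wr i j k x (f (rd i j k x)) else x
  invFun x := if cond3 i j k x then wr i j k x (f.symm (rd i j k x)) else x
  left_inv x := by
    dsimp only
    by_cases hc : cond3 i j k x
    · rw [if_pos hc, if_pos (cond3_wr.mpr hc), rd_wr hij hik hjk, wr_wr,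
        Equiv.symm_apply_apply, wr_rd]
    · rw [if_neg hc, if_neg hc]
  right_inv x := by
    dsimp only
    by_cases hc : cond3 i j k x
    · rw [if_pos hc, if_pos (cond3_wr.mpr hc), rd_wr hij hik hjk, wr_wr,
        Equiv.apply_symm_apply, wr_rd]
    · rw [if_neg hc, if_neg hc]

lemma G_apply (hij : i ≠ j) (hik : i ≠ k) (hjk : j ≠ k) (f : Perm B3) (x) :
    G hij hik hjk f x = if cond3 i j k x then wr i j k x (f (rd i j k x)) else x := rfl

lemma G_mul (hij : i ≠ j) (hik : i ≠ k) (hjk : j ≠ k) (f g : Perm B3) :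
    G hij hik hjk f * G hij hik hjk g = G hij hik hjk (f * g) := by
  apply Equiv.ext; intro x
  simp only [Perm.mul_apply, G_apply]
  by_cases hc : cond3 i j k x
  · rw [if_pos hc, if_pos (cond3_wr.mpr hc), if_pos hc, rd_wr hij hik hjk, wr_wr]
  · rw [if_neg hc, if_neg hc, if_neg hc]

lemma G_kij (hij : i ≠ j) (hik : i ≠ k) (hjk : j ≠ k) (f : Perm B3) :
    G hik.symm hjk.symm hij f = G hij hik hjk (ρ * f * ρ⁻¹) := by
  apply Equiv.ext; intro x
  have hcond : cond3 k i j x ↔ cond3 i j k x :=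
    ⟨fun h m h1 h2 h3 => h m h3 h1 h2, fun h m h1 h2 h3 => h m h2 h3 h1⟩
  have hwr : ∀ v : B3, wr k i j x v = wr i j k x (v.2.1, v.2.2, v.1) := by
    intro v
    funext m
    by_cases h1 : m = i <;> by_cases h2 : m = j <;> by_cases h3 : m = k <;>
      simp_all [wr]
  simp only [G_apply]
  by_cases hc : cond3 i j k x
  · rw [if_pos (hcond.mpr hc), if_pos hc, hwr]
    rfl
  · rw [if_neg (fun h => hc (hcond.mp h)), if_neg hc]

lemma G_jki (hij : i ≠ j) (hik : i ≠ k) (hjk : j ≠ k) (f : Perm B3) :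
    G hjk hij.symm hik.symm f = G hij hik hjk (ρ⁻¹ * f * ρ) := by
  apply Equiv.ext; intro x
  have hcond : cond3 j k i x ↔ cond3 i j k x :=
    ⟨fun h m h1 h2 h3 => h m h2 h3 h1, fun h m h1 h2 h3 => h m h3 h1 h2⟩
  have hwr : ∀ v : B3, wr j k i x v = wr i j k x (v.2.2, v.1, v.2.1) := by
    intro v
    funext m
    by_cases h1 : m = i <;> by_cases h2 : m = j <;> by_cases h3 : m = k <;>
      simp_all [wr]
  simp only [G_apply]
  by_cases hc : cond3 i j k x
  · rw [if_pos (hcond.mpr hc), if_pos hc, hwr]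
    rfl
  · rw [if_neg (fun h => hc (hcond.mp h)), if_neg hc]

lemma G_mem_SC (hij : i ≠ j) (hik : i ≠ k) (hjk : j ≠ k) (f : Perm B3)
    (hf1 : ∀ v : B3, (f v).1 = v.1)
    (hf2 : ∀ v : B3, f (!v.1, v.2) = (!(f v).1, (f v).2)) :
    G hij hik hjk f ∈ SC i := by
  have hcf : ∀ x, cond3 i j k (flipBit i x) ↔ cond3 i j k x := by
    intro x
    constructor <;> intro h m h1 h2 h3
    · have := h m h1 h2 h3
      rwa [flipBit, Function.update_of_ne h1] at this
    · rw [flipBit, Function.update_of_ne h1]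
      exact h m h1 h2 h3
  constructor
  · intro x
    rw [G_apply]
    split_ifs with hc
    · rw [wr_i]; exact hf1 _
    · rfl
  · intro x m hm
    rw [G_apply, G_apply]
    by_cases hc : cond3 i j k x
    · rw [if_pos hc, if_pos ((hcf x).mpr hc)]
      have hrd : rd i j k (flipBit i x) = (!(x i), x j, x k) := by
        simp [rd, flipBit, Function.update_self, Function.update_of_ne hij.symm,
          Function.update_of_ne hik.symm]
      rw [hrd, show ((!(x i), x j, x k) : B3) = (!(rd i j k x).1, (rd i j k x).2) from rfl,
        hf2]
      by_cases h2' : m = j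
      · subst h2'; rw [wr_j hij, wr_j hij]
      · by_cases h3' : m = k
        · subst h3'; rw [wr_k hik hjk, wr_k hik hjk]
        · rw [wr_out _ _ hm h2' h3', wr_out _ _ hm h2' h3']
          exact (Function.update_of_ne hm _ _).symm
    · rw [if_neg hc, if_neg (fun h => hc ((hcf x).mp h))]
      exact (Function.update_of_ne hm _ _).symm

lemma SC_face {σ : Perm (Fin n → Bool)} (hσ : σ ∈ SC i) :
    ∀ x : Fin n → Bool, x i = false ↔ σ x i = false := fun x => by rw [hσ.1 x]

lemma SC_flip {σ : Perm (Fin n → Bool)} (hσ : σ ∈ SC i) (x) :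
    σ (flipBit i x) = flipBit i (σ x) := by
  funext m
  by_cases hm : m = i
  · subst hm
    rw [hσ.1]
    simp [flipBit, Function.update_self, hσ.1 x]
  · rw [← hσ.2 x m hm]
    exact (Function.update_of_ne hm _ _).symm

lemma SC_mul {σ τ : Perm (Fin n → Bool)} (hσ : σ ∈ SC i) (hτ : τ ∈ SC i) :
    σ * τ ∈ SC i :=
  ⟨fun x => by rw [Perm.mul_apply, hσ.1, hτ.1],
   fun x m hm => by
    rw [Perm.mul_apply, Perm.mul_apply, SC_flip hτ, ← hσ.2 (τ x) m hm]⟩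

lemma subtypePerm_congr {α : Type*} {p : α → Prop} {σ τ : Perm α} (h : σ = τ)
    (hσ : ∀ x, p x ↔ p (σ x)) (hτ : ∀ x, p x ↔ p (τ x)) :
    σ.subtypePerm (p := p) (fun x => (hσ x).symm) =
      τ.subtypePerm (p := p) (fun x => (hτ x).symm) := by subst h; rfl

lemma subtypePerm_mul' {α : Type*} {p : α → Prop} (σ τ : Perm α)
    (hσ : ∀ x, p x ↔ p (σ x)) (hτ : ∀ x, p x ↔ p (τ x))
    (h : ∀ x, p x ↔ p ((σ * τ) x)) :
    (σ * τ).subtypePerm (p := p) (fun x => (h x).symm) =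
      σ.subtypePerm (p := p) (fun x => (hσ x).symm) * τ.subtypePerm (p := p) (fun x => (hτ x).symm) := rfl

lemma subtypePerm_G_swap (hij : i ≠ j) (hik : i ≠ k) (hjk : j ≠ k) (f : Perm B3)
    (A B : B3) (hA : A.1 = false) (hB : B.1 = false)
    (hfA : f A = B) (hfB : f B = A)
    (hfix : ∀ v : B3, v.1 = false → v ≠ A → v ≠ B → f v = v)
    (h : ∀ x : Fin n → Bool, x i = false ↔ (G hij hik hjk f) x i = false) :
    (G hij hik hjk f).subtypePerm (p := fun y => y i = false) (fun x => (h x).symm) =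
      Equiv.swap ⟨pt i j k A, (wr_i _ _).trans hA⟩ ⟨pt i j k B, (wr_i _ _).trans hB⟩ := by
  apply Equiv.ext
  rintro ⟨x, hx⟩
  apply Subtype.ext
  show (G hij hik hjk f) x = _
  by_cases hc : cond3 i j k x
  · have hxpt : x = pt i j k (rd i j k x) := eq_pt hij hik hjk hc
    have hv1 : (rd i j k x).1 = false := hx
    by_cases hvA : rd i j k x = A
    · have hxA : (⟨x, hx⟩ : {y : Fin n → Bool // y i = false}) =
          ⟨pt i j k A, (wr_i _ _).trans hA⟩ := Subtype.ext (by show x = _; rw [hxpt, hvA])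
      rw [hxA, Equiv.swap_apply_left]
      rw [G_apply, if_pos hc, hvA, hfA, wr_eq_pt hc]
    · by_cases hvB : rd i j k x = B
      · have hxB : (⟨x, hx⟩ : {y : Fin n → Bool // y i = false}) =
            ⟨pt i j k B, (wr_i _ _).trans hB⟩ := Subtype.ext (by show x = _; rw [hxpt, hvB])
        rw [hxB, Equiv.swap_apply_right]
        rw [G_apply, if_pos hc, hvB, hfB, wr_eq_pt hc]
      · have hne1 : (⟨x, hx⟩ : {y : Fin n → Bool // y i = false}) ≠
            ⟨pt i j k A, (wr_i _ _).trans hA⟩ := by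
          intro hcontr
          apply hvA
          have hxA : x = pt i j k A := congrArg Subtype.val hcontr
          rw [hxA, rd_pt hij hik hjk]
        have hne2 : (⟨x, hx⟩ : {y : Fin n → Bool // y i = false}) ≠
            ⟨pt i j k B, (wr_i _ _).trans hB⟩ := by
          intro hcontr
          apply hvB
          have hxB : x = pt i j k B := congrArg Subtype.val hcontr
          rw [hxB, rd_pt hij hik hjk]
        rw [Equiv.swap_apply_of_ne_of_ne hne1 hne2]
        rw [G_apply, if_pos hc, hfix _ hv1 hvA hvB, wr_rd]
  · have hne1 : (⟨x, hx⟩ : {y : Fin n → Bool // y i = false}) ≠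
        ⟨pt i j k A, (wr_i _ _).trans hA⟩ := by
      intro hcontr
      have hxA : x = pt i j k A := congrArg Subtype.val hcontr
      exact hc (by rw [hxA]; exact cond3_pt A)
    have hne2 : (⟨x, hx⟩ : {y : Fin n → Bool // y i = false}) ≠
        ⟨pt i j k B, (wr_i _ _).trans hB⟩ := by
      intro hcontr
      have hxB : x = pt i j k B := congrArg Subtype.val hcontr
      exact hc (by rw [hxB]; exact cond3_pt B)
    rw [Equiv.swap_apply_of_ne_of_ne hne1 hne2, G_apply, if_neg hc]

lemma G_mem_AC (hij : i ≠ j) (hik : i ≠ k) (hjk : j ≠ k) (s t : Perm B3)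
    (hs1 : ∀ v : B3, (s v).1 = v.1)
    (hs2 : ∀ v : B3, s (!v.1, v.2) = (!(s v).1, (s v).2))
    (ht1 : ∀ v : B3, (t v).1 = v.1)
    (ht2 : ∀ v : B3, t (!v.1, v.2) = (!(t v).1, (t v).2))
    (A B C D : B3) (hA : A.1 = false) (hB : B.1 = false)
    (hC : C.1 = false) (hD : D.1 = false)
    (hsA : s A = B) (hsB : s B = A)
    (hsfix : ∀ v : B3, v.1 = false → v ≠ A → v ≠ B → s v = v) (hAB : A ≠ B)
    (htC : t C = D) (htD : t D = C)
    (htfix : ∀ v : B3, v.1 = false → v ≠ C → v ≠ D → t v = v) (hCD : C ≠ D) :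
    G hij hik hjk (s * t) ∈ AC i := by
  have hscs : G hij hik hjk s ∈ SC i := G_mem_SC hij hik hjk s hs1 hs2
  have hsct : G hij hik hjk t ∈ SC i := G_mem_SC hij hik hjk t ht1 ht2
  have hsc : G hij hik hjk (s * t) ∈ SC i := by
    rw [← G_mul]; exact SC_mul hscs hsct
  refine ⟨hsc, SC_face hsc, ?_⟩
  rw [subtypePerm_congr (G_mul hij hik hjk s t).symm (SC_face hsc)
      (SC_face (SC_mul hscs hsct)),
    subtypePerm_mul' _ _ (SC_face hscs) (SC_face hsct) (SC_face (SC_mul hscs hsct)), map_mul,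
    subtypePerm_G_swap hij hik hjk s A B hA hB hsA hsB hsfix (SC_face hscs),
    subtypePerm_G_swap hij hik hjk t C D hC hD htC htD htfix (SC_face hsct),
    Equiv.Perm.sign_swap, Equiv.Perm.sign_swap]
  · norm_num
  · intro hcontr
    exact hCD (pt_inj hij hik hjk (Subtype.ext_iff.mp hcontr))
  · intro hcontr
    exact hAB (pt_inj hij hik hjk (Subtype.ext_iff.mp hcontr))

end Lift

end OddFour

open OddFour in
/-- A concurrently odd concurrent controlled permutation exists that is a
product of four concurrently even blocks in dimensions `r₃, r₂, r₁, r₂`. -/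
theorem odd_from_four_even (n : ℕ) (hn : 3 ≤ n) (r1 r2 r3 : Fin n)
    (h12 : r1 ≠ r2) (h13 : r1 ≠ r3) (h23 : r2 ≠ r3) :
    ∃ π ∈ SC r1,
      (∃ h : ∀ x : Fin n → Bool, x r1 = false ↔ π x r1 = false,
        Perm.sign (π.subtypePerm (p := fun y => y r1 = false) (fun x => (h x).symm)) = -1) ∧
      ∃ τ1 ∈ AC r3, ∃ τ2 ∈ AC r2, ∃ τ3 ∈ AC r1, ∃ τ4 ∈ AC r2,
        π = τ1 * τ2 * τ3 * τ4 := by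
  have hscπ : G h12 h13 h23 w ∈ SC r1 :=
    G_mem_SC h12 h13 h23 w (by decide) (by decide)
  refine ⟨G h12 h13 h23 w, hscπ, ⟨SC_face hscπ, ?_⟩,
    G h13.symm h23.symm h12 q, ?_,
    G h23 h12.symm h13.symm q⁻¹, ?_,
    G h12 h13 h23 q, ?_,
    G h23 h12.symm h13.symm q, ?_, ?_⟩
  · rw [subtypePerm_G_swap h12 h13 h23 w (false, false, true) (false, true, true)
      rfl rfl (by decide) (by decide) (by decide) (SC_face hscπ), Equiv.Perm.sign_swap]
    intro hcontr
    exact (by decide : ((false, false, true) : B3) ≠ (false, true, true))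
      (pt_inj h12 h13 h23 (Subtype.ext_iff.mp hcontr))
  · exact G_mem_AC h13.symm h23.symm h12 s1 s2 (by decide) (by decide) (by decide)
      (by decide) (false, false, true) (false, true, false)
      (false, true, false) (false, true, true) rfl rfl rfl rfl
      (by decide) (by decide) (by decide) (by decide)
      (by decide) (by decide) (by decide) (by decide)
  · have hqinv : (q⁻¹ : Perm B3) = s2 * s1 := Equiv.ext (by decide)
    rw [hqinv]
    exact G_mem_AC h23 h12.symm h13.symm s2 s1 (by decide) (by decide) (by decide)
      (by decide) (false, true, false) (false, true, true)
      (false, false, true) (false, true, false) rfl rfl rfl rfl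
      (by decide) (by decide) (by decide) (by decide)
      (by decide) (by decide) (by decide) (by decide)
  · exact G_mem_AC h12 h13 h23 s1 s2 (by decide) (by decide) (by decide)
      (by decide) (false, false, true) (false, true, false)
      (false, true, false) (false, true, true) rfl rfl rfl rfl
      (by decide) (by decide) (by decide) (by decide)
      (by decide) (by decide) (by decide) (by decide)
  · exact G_mem_AC h23 h12.symm h13.symm s1 s2 (by decide) (by decide) (by decide)
      (by decide) (false, false, true) (false, true, false)
      (false, true, false) (false, true, true) rfl rfl rfl rfl
      (by decide) (by decide) (by decide) (by decide)
      (by decide) (by decide) (by decide) (by decide)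
  · rw [G_kij h12 h13 h23 q, G_jki h12 h13 h23 q⁻¹, G_jki h12 h13 h23 q,
      G_mul, G_mul, G_mul]
    congr 1
    exact Equiv.ext (by decide)
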